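/- Let A := ⋃_{n ≥ 0} (2·4^n ℤ + (4^n − 1)) and B := ⋃_{n ≥ 1} (4^n ℤ + (2·4^{n−1} − 1)) ∪ {−1} as subsets of ℤ, and regard them as subsets of the 2-adic integers ℤ₂ via the canonical embedding ℤ → ℤ₂. Then the closures of A and of B in ℤ₂ satisfy: closure(A) ∪ closure(B) = ℤ₂ and closure(A) ∩ closure(B) = {−1}. -/

import Mathlib

open PadicInt

private lemma norm_two' : ‖(2 : ℤ_[2])‖ = (2:ℝ)⁻¹ := by
  have := PadicInt.norm_p (p := 2)
  simpa using this

private lemma norm_four_pow (n : ℕ) : ‖((4:ℤ_[2]))^n‖ = (2:ℝ) ^ (-(2*n : ℤ)) := by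
  have h4 : (4:ℤ_[2]) = 2^2 := by norm_num
  rw [h4, ← pow_mul, norm_pow, norm_two']
  rw [← zpow_natCast ((2:ℝ)⁻¹) (2*n), inv_zpow, ← zpow_neg]
  norm_num

private lemma norm_odd (j : ℤ) : ‖((2*j+1 : ℤ) : ℤ_[2])‖ = 1 := by
  rcases lt_or_eq_of_le (PadicInt.norm_le_one ((2*j+1 : ℤ) : ℤ_[2])) with h | h
  · rw [PadicInt.norm_int_lt_one_iff_dvd] at h
    exfalso
    omega
  · exact h

private lemma normA (n : ℕ) (j : ℤ) :
    ‖(((2 * 4 ^ n * j + (4 ^ n - 1) : ℤ)) : ℤ_[2]) + 1‖ = (2:ℝ) ^ (-(2*n : ℤ)) := by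
  have : (((2 * 4 ^ n * j + (4 ^ n - 1) : ℤ)) : ℤ_[2]) + 1
      = (4:ℤ_[2])^n * ((2*j+1 : ℤ) : ℤ_[2]) := by push_cast; ring
  rw [this, norm_mul, norm_odd, norm_four_pow, mul_one]

private lemma normB (n : ℕ) (j : ℤ) :
    ‖(((4 ^ (n+1) * j + (2 * 4 ^ n - 1) : ℤ)) : ℤ_[2]) + 1‖ = (2:ℝ) ^ (-(2*n+1 : ℤ)) := by
  have : (((4 ^ (n+1) * j + (2 * 4 ^ n - 1) : ℤ)) : ℤ_[2]) + 1
      = (2:ℤ_[2]) * ((4:ℤ_[2])^n * ((2*j+1 : ℤ) : ℤ_[2])) := by push_cast; ring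
  rw [this, norm_mul, norm_mul, norm_odd, norm_four_pow, mul_one, norm_two']
  rw [← zpow_neg_one (2:ℝ), ← zpow_add₀ (by norm_num : (2:ℝ) ≠ 0)]
  ring_nf

private lemma two_pow_inj : Function.Injective (fun n : ℤ => (2:ℝ) ^ n) :=
  zpow_right_injective₀ (by norm_num) (by norm_num)

private lemma isOpen_sphere (e : ℤ) : IsOpen {x : ℤ_[2] | ‖x + 1‖ = (2:ℝ) ^ e} := by
  rw [Metric.isOpen_iff]
  intro x hx
  refine ⟨(2:ℝ) ^ e, by positivity, fun y hy => ?_⟩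
  have hx' : ‖x + 1‖ = (2:ℝ) ^ e := hx
  have hyx : ‖y - x‖ < ‖x + 1‖ := by
    rw [hx']; rwa [Metric.mem_ball, dist_eq_norm] at hy
  have h1 : ‖y + 1‖ ≤ ‖x + 1‖ := by
    calc ‖y + 1‖ = ‖(x + 1) + (y - x)‖ := by ring_nf
    _ ≤ max ‖x + 1‖ ‖y - x‖ := PadicInt.nonarchimedean _ _
    _ ≤ ‖x + 1‖ := max_le le_rfl hyx.le
  have h2 : ‖x + 1‖ ≤ ‖y + 1‖ := by
    by_contra hlt
    push_neg at hlt
    have hle : ‖x + 1‖ ≤ max ‖y + 1‖ ‖y - x‖ := by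
      calc ‖x + 1‖ = ‖(y + 1) + -(y - x)‖ := by ring_nf
      _ ≤ max ‖y + 1‖ ‖-(y - x)‖ := PadicInt.nonarchimedean _ _
      _ = max ‖y + 1‖ ‖y - x‖ := by rw [norm_neg]
    exact absurd (lt_of_le_of_lt hle (max_lt hlt hyx)) (lt_irrefl _)
  show ‖y + 1‖ = _
  rw [le_antisymm h1 h2, hx']

private lemma mem_closure_ap (c r : ℤ) (t : ℤ_[2]) :
    (c : ℤ_[2]) * t + r ∈
      closure ((fun k : ℤ => (k : ℤ_[2])) '' {k : ℤ | ∃ j : ℤ, k = c * j + r}) := by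
  have hc : Continuous (fun y : ℤ_[2] => (c : ℤ_[2]) * y + r) := by continuity
  have ht : t ∈ closure (Set.range (fun k : ℤ => (k : ℤ_[2]))) := by
    have := PadicInt.denseRange_intCast (p := 2)
    exact this t
  refine map_mem_closure (f := fun y : ℤ_[2] => (c : ℤ_[2]) * y + (r : ℤ_[2])) hc ht ?_
  rintro _ ⟨k, rfl⟩
  exact ⟨c * k + r, ⟨k, rfl⟩, by push_cast; ring⟩

private lemma odd_unit (y : ℤ_[2]) (h : ¬ (2:ℤ_[2]) ∣ y) : ∃ t : ℤ_[2], y = 1 + 2 * t := by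
  have hs := PadicInt.appr_spec 1 y
  rw [Ideal.mem_span_singleton, pow_one] at hs
  have hl : y.appr 1 < 2 := by simpa using PadicInt.appr_lt y 1
  rcases (by omega : y.appr 1 = 0 ∨ y.appr 1 = 1) with h0 | h1
  · rw [h0] at hs
    simp only [Nat.cast_zero, sub_zero] at hs
    exact absurd hs h
  · rw [h1] at hs
    obtain ⟨t, ht⟩ := hs
    exact ⟨t, by push_cast at ht; linear_combination ht⟩

private lemma closureA_subset :
    closure ((fun k : ℤ => (k : ℤ_[2])) ''
        {k : ℤ | ∃ n : ℕ, ∃ j : ℤ, k = 2 * 4 ^ n * j + (4 ^ n - 1)}) ⊆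
      {x : ℤ_[2] | ∀ m : ℕ, ‖x + 1‖ ≠ (2:ℝ) ^ (-(2 * m + 1 : ℤ))} := by
  refine closure_minimal ?_ ?_
  · rintro _ ⟨k, ⟨n, j, rfl⟩, rfl⟩ m hcon
    have := two_pow_inj ((normA n j).symm.trans hcon)
    omega
  · have he : {x : ℤ_[2] | ∀ m : ℕ, ‖x + 1‖ ≠ (2:ℝ) ^ (-(2 * m + 1 : ℤ))}
        = (⋃ m : ℕ, {x : ℤ_[2] | ‖x + 1‖ = (2:ℝ) ^ (-(2 * m + 1 : ℤ))})ᶜ := by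
      ext x
      simp [Set.mem_iUnion]
    rw [he]
    exact (isOpen_iUnion (fun m => isOpen_sphere _)).isClosed_compl

private lemma closureB_subset :
    closure ((fun k : ℤ => (k : ℤ_[2])) ''
        ({k : ℤ | ∃ n : ℕ, ∃ j : ℤ, k = 4 ^ (n + 1) * j + (2 * 4 ^ n - 1)} ∪ {-1})) ⊆
      {x : ℤ_[2] | ∀ m : ℕ, ‖x + 1‖ ≠ (2:ℝ) ^ (-(2 * m : ℤ))} := by
  refine closure_minimal ?_ ?_
  · rintro _ ⟨k, hk | hk, rfl⟩ m hcon
    · obtain ⟨n, j, rfl⟩ := hk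
      have := two_pow_inj ((normB n j).symm.trans hcon)
      omega
    · have hk' : k = -1 := hk
      rw [hk'] at hcon
      rw [show ((-1 : ℤ) : ℤ_[2]) + 1 = 0 by push_cast; ring, norm_zero] at hcon
      have : (0:ℝ) < (2:ℝ) ^ (-(2 * m : ℤ)) := by positivity
      rw [← hcon] at this
      exact lt_irrefl _ this
  · have he : {x : ℤ_[2] | ∀ m : ℕ, ‖x + 1‖ ≠ (2:ℝ) ^ (-(2 * m : ℤ))}
        = (⋃ m : ℕ, {x : ℤ_[2] | ‖x + 1‖ = (2:ℝ) ^ (-(2 * m : ℤ))})ᶜ := by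
      ext x
      simp [Set.mem_iUnion]
    rw [he]
    exact (isOpen_iUnion (fun m => isOpen_sphere _)).isClosed_compl

private lemma neg_one_mem_closureA :
    (-1 : ℤ_[2]) ∈ closure ((fun k : ℤ => (k : ℤ_[2])) ''
        {k : ℤ | ∃ n : ℕ, ∃ j : ℤ, k = 2 * 4 ^ n * j + (4 ^ n - 1)}) := by
  rw [Metric.mem_closure_iff]
  intro ε hε
  obtain ⟨n, hn⟩ := exists_pow_lt_of_lt_one hε (by norm_num : (1/2 : ℝ) < 1)
  refine ⟨((4 ^ n - 1 : ℤ) : ℤ_[2]), ⟨4 ^ n - 1, ⟨n, 0, by ring⟩, rfl⟩, ?_⟩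
  have hd : dist (-1 : ℤ_[2]) ((4 ^ n - 1 : ℤ) : ℤ_[2]) = ‖(4 : ℤ_[2]) ^ n‖ := by
    rw [dist_eq_norm, show (-1 : ℤ_[2]) - ((4 ^ n - 1 : ℤ) : ℤ_[2]) = -((4:ℤ_[2])^n) by
      push_cast; ring, norm_neg]
  rw [hd, norm_four_pow]
  have h1 : (2:ℝ) ^ (-(2 * n : ℤ)) = (1/2 : ℝ) ^ (2 * n) := by
    rw [one_div, ← zpow_natCast ((2:ℝ)⁻¹), inv_zpow, ← zpow_neg]
    norm_num
  rw [h1]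
  calc (1/2 : ℝ) ^ (2 * n) ≤ (1/2 : ℝ) ^ n :=
        pow_le_pow_of_le_one (by norm_num) (by norm_num) (by omega)
  _ < ε := hn

private lemma valuation_stuff (z : ℤ_[2]) (hz : z ≠ 0) :
    ∃ m : ℕ, ‖z‖ = (2:ℝ) ^ (-(m:ℤ)) ∧ (2:ℤ_[2]) ^ m ∣ z ∧ ¬ (2:ℤ_[2]) ^ (m+1) ∣ z := by
  refine ⟨z.valuation, ?_, ?_, ?_⟩
  · rw [PadicInt.norm_eq_zpow_neg_valuation hz]
    norm_num
  · rw [← Ideal.mem_span_singleton,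
      show (2:ℤ_[2]) = ((2:ℕ) : ℤ_[2]) by norm_num,
      PadicInt.mem_span_pow_iff_le_valuation z hz]
  · intro hdvd
    rw [← Ideal.mem_span_singleton,
      show (2:ℤ_[2]) = ((2:ℕ) : ℤ_[2]) by norm_num,
      PadicInt.mem_span_pow_iff_le_valuation z hz] at hdvd
    omega

/-- The closures in the 2-adic integers of the sets `Λ_a` and `Λ_b` of left endpoints of the
period doubling chain cover `ℤ₂` and intersect exactly in `{-1}`. -/
theorem periodDoubling_closures_in_padicInt :
    closure ((fun k : ℤ => (k : ℤ_[2])) ''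
        {k : ℤ | ∃ n : ℕ, ∃ j : ℤ, k = 2 * 4 ^ n * j + (4 ^ n - 1)}) ∪
      closure ((fun k : ℤ => (k : ℤ_[2])) ''
        ({k : ℤ | ∃ n : ℕ, ∃ j : ℤ, k = 4 ^ (n + 1) * j + (2 * 4 ^ n - 1)} ∪ {-1})) =
      Set.univ ∧
    closure ((fun k : ℤ => (k : ℤ_[2])) ''
        {k : ℤ | ∃ n : ℕ, ∃ j : ℤ, k = 2 * 4 ^ n * j + (4 ^ n - 1)}) ∩
      closure ((fun k : ℤ => (k : ℤ_[2])) ''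
        ({k : ℤ | ∃ n : ℕ, ∃ j : ℤ, k = 4 ^ (n + 1) * j + (2 * 4 ^ n - 1)} ∪ {-1})) =
      {(-1 : ℤ_[2])} := by
  constructor
  · rw [Set.eq_univ_iff_forall]
    intro x
    by_cases hx : x = -1
    · right
      subst hx
      exact subset_closure ⟨-1, Or.inr rfl, by push_cast; ring⟩
    · have hz : x + 1 ≠ 0 := fun h => hx (by linear_combination h)
      obtain ⟨m, hnorm, ⟨y, hy⟩, hnd⟩ := valuation_stuff (x + 1) hz
      have h2y : ¬ (2 : ℤ_[2]) ∣ y := by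
        rintro ⟨w, rfl⟩
        exact hnd ⟨w, by rw [hy]; ring⟩
      obtain ⟨t, rfl⟩ := odd_unit y h2y
      rcases Nat.even_or_odd m with ⟨n, rfl⟩ | ⟨n, rfl⟩
      · left
        have h4 : ((4 : ℤ_[2])) ^ n = 2 ^ (n + n) := by
          rw [show (4 : ℤ_[2]) = 2 ^ 2 by norm_num, ← pow_mul, two_mul]
        have hx2 : x = ((2 * 4 ^ n : ℤ) : ℤ_[2]) * t + ((4 ^ n - 1 : ℤ) : ℤ_[2]) := by
          push_cast
          rw [h4]
          linear_combination hy
        rw [hx2]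
        refine closure_mono (Set.image_mono ?_) (mem_closure_ap (2 * 4 ^ n) (4 ^ n - 1) t)
        rintro k ⟨j, hj⟩
        exact ⟨n, j, hj⟩
      · right
        have h4 : ((4 : ℤ_[2])) ^ n = 2 ^ (n + n) := by
          rw [show (4 : ℤ_[2]) = 2 ^ 2 by norm_num, ← pow_mul, two_mul]
        have hx2 : x = ((4 ^ (n + 1) : ℤ) : ℤ_[2]) * t + ((2 * 4 ^ n - 1 : ℤ) : ℤ_[2]) := by
          push_cast
          rw [pow_succ, h4]
          rw [show 2 * n + 1 = (n + n) + 1 by ring, pow_succ] at hy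
          linear_combination hy
        rw [hx2]
        refine closure_mono (Set.image_mono ?_)
          (mem_closure_ap (4 ^ (n + 1)) (2 * 4 ^ n - 1) t)
        rintro k ⟨j, hj⟩
        exact Or.inl ⟨n, j, hj⟩
  · ext x
    simp only [Set.mem_inter_iff, Set.mem_singleton_iff]
    constructor
    · rintro ⟨hA, hB⟩
      by_contra hx
      have hz : x + 1 ≠ 0 := fun h => hx (by linear_combination h)
      obtain ⟨m, hnorm, -, -⟩ := valuation_stuff (x + 1) hz
      rcases Nat.even_or_odd m with ⟨n, rfl⟩ | ⟨n, rfl⟩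
      · exact closureB_subset hB n
          (by rw [hnorm, show (-((n + n : ℕ) : ℤ)) = -(2 * (n : ℤ)) by push_cast; ring])
      · exact closureA_subset hA n
          (by rw [hnorm, show (-((2 * n + 1 : ℕ) : ℤ)) = -(2 * (n : ℤ) + 1) by push_cast; ring])
    · rintro rfl
      exact ⟨neg_one_mem_closureA, subset_closure ⟨-1, Or.inr rfl, by push_cast; ring⟩⟩
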